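/- If F is a nonprincipal filter on ω (identified with a subset of 2^ω via characteristic functions) that is measurable with respect to a product measure μ_p̂ on 2^ω determined by a sequence p̂ = (p_n) with p_n ∈ (0,1/2], then μ_p̂(F) = 0. In other words, a measurable nonprincipal filter must be null. -/

import Mathlib

open MeasureTheory Filter Set
open scoped ENNReal

/-- `μ` is the product (Bernoulli) measure on `Bool^ι` determined by the sequence `p`:
a probability measure giving each cylinder set its natural product value. -/
def IsBernoulli {ι : Type*} (μ : Measure (ι → Bool)) (p : ι → ℝ≥0∞) : Prop :=
  IsProbabilityMeasure μ ∧
    ∀ (s : Finset ι) (f : ι → Bool),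
      μ {x | ∀ i ∈ s, x i = f i} = ∏ i ∈ s, (if f i then p i else 1 - p i)

/-- The subset of `2^ω` corresponding to a filter on `ω`, via characteristic functions. -/
def filterSet (F : Filter ℕ) : Set (ℕ → Bool) := {x | {n | x n = true} ∈ F}


namespace BernoulliConstruction

noncomputable section

abbrev S := Bool × Bool

def stepRe (q : ℕ → ℝ) (n : ℕ) (u : ℝ) : ℝ :=
  if u < q n then u / q n
  else if u < 2 * q n then (u - q n) / q n
  else (u - 2 * q n) / (1 - 2 * q n)

def stepOut (q : ℕ → ℝ) (o : ℕ → Fin 3 → S) (n : ℕ) (u : ℝ) : S :=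
  if u < q n then o n 0 else if u < 2 * q n then o n 1 else o n 2

def iter (q : ℕ → ℝ) : ℕ → ℝ → ℝ
  | 0 => id
  | n + 1 => fun u => stepRe q n (iter q n u)

def Phi (q : ℕ → ℝ) (o : ℕ → Fin 3 → S) (u : ℝ) : ℕ → S :=
  fun n => stepOut q o n (iter q n u)

open scoped Classical in
def lenE (q : ℕ → ℝ) (o : ℕ → Fin 3 → S) (n : ℕ) (T : Set S) : ℝ≥0∞ :=
  (if o n 0 ∈ T then ENNReal.ofReal (q n) else 0) +
    (if o n 1 ∈ T then ENNReal.ofReal (q n) else 0) +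
      (if o n 2 ∈ T then ENNReal.ofReal (1 - 2 * q n) else 0)

def shf {α : Type*} (g : ℕ → α) : ℕ → α := fun n => g (n + 1)

lemma measurable_stepRe (q : ℕ → ℝ) (n : ℕ) : Measurable (stepRe q n) := by
  unfold stepRe
  refine Measurable.ite ?_ (measurable_id.div_const _) (Measurable.ite ?_
    ((measurable_id.sub measurable_const).div_const _)
    ((measurable_id.sub measurable_const).div_const _))
  · exact measurableSet_lt measurable_id measurable_const
  · exact measurableSet_lt measurable_id measurable_const

lemma measurable_stepOut (q : ℕ → ℝ) (o : ℕ → Fin 3 → S) (n : ℕ) :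
    Measurable (stepOut q o n) := by
  unfold stepOut
  refine Measurable.ite ?_ measurable_const (Measurable.ite ?_ measurable_const measurable_const)
  · exact measurableSet_lt measurable_id measurable_const
  · exact measurableSet_lt measurable_id measurable_const

lemma measurable_iter (q : ℕ → ℝ) (n : ℕ) : Measurable (iter q n) := by
  induction n with
  | zero => exact measurable_id
  | succ n ih => exact (measurable_stepRe q n).comp ih

lemma measurable_Phi (q : ℕ → ℝ) (o : ℕ → Fin 3 → S) : Measurable (Phi q o) :=
  measurable_pi_lambda _ fun n => (measurable_stepOut q o n).comp (measurable_iter q n)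

lemma iter_shift (q : ℕ → ℝ) : ∀ (i : ℕ) (u : ℝ),
    iter q (i + 1) u = iter (shf q) i (stepRe q 0 u) := by
  intro i
  induction i with
  | zero => intro u; simp [iter]
  | succ i ih =>
    intro u
    show stepRe q (i + 1) (iter q (i + 1) u) = stepRe (shf q) i (iter (shf q) i (stepRe q 0 u))
    rw [ih u]
    rfl

lemma affine_vol (c L : ℝ) (hL : 0 < L) (W : Set ℝ) :
    volume ((fun u => (u - c) / L) ⁻¹' W) = ENNReal.ofReal L * volume W := by
  have h1 : (fun u : ℝ => (u - c) / L) = (fun v : ℝ => L⁻¹ * v) ∘ (fun u : ℝ => -c + u) := by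
    funext u; simp only [Function.comp_apply]; ring
  rw [h1, Set.preimage_comp]
  rw [measure_preimage_add]
  rw [Real.volume_preimage_mul_left (by positivity : (L:ℝ)⁻¹ ≠ 0)]
  rw [inv_inv, abs_of_pos hL]

def condSet (q : ℕ → ℝ) (o : ℕ → Fin 3 → S) (f : ℕ → Set S) (n : ℕ) : Set ℝ :=
  {u | u ∈ Ico (0:ℝ) 1 ∧ ∀ i < n, stepOut q o i (iter q i u) ∈ f i}

lemma measurableSet_S (T : Set S) : MeasurableSet T :=
  (Set.to_countable T).measurableSet

lemma measurableSet_condSet (q : ℕ → ℝ) (o : ℕ → Fin 3 → S) (f : ℕ → Set S) (n : ℕ) :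
    MeasurableSet (condSet q o f n) := by
  have : condSet q o f n =
      Ico (0:ℝ) 1 ∩ ⋂ i ∈ Finset.range n, (fun u => stepOut q o i (iter q i u)) ⁻¹' f i := by
    ext u
    simp only [condSet, mem_setOf_eq, mem_inter_iff, mem_iInter, Finset.mem_range, mem_preimage]
  rw [this]
  exact measurableSet_Ico.inter <| MeasurableSet.biInter (Set.to_countable _)
    fun i _ => ((measurable_stepOut q o i).comp (measurable_iter q i)) (measurableSet_S (f i))

lemma condSet_subset (q : ℕ → ℝ) (o : ℕ → Fin 3 → S) (f : ℕ → Set S) (n : ℕ) :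
    condSet q o f n ⊆ Ico (0:ℝ) 1 := fun _ hu => hu.1

lemma vol_condSet : ∀ (n : ℕ) (q : ℕ → ℝ), (∀ k, 0 < q k ∧ q k ≤ 1/2) →
    ∀ (o : ℕ → Fin 3 → S) (f : ℕ → Set S),
    volume (condSet q o f n) = ∏ i ∈ Finset.range n, lenE q o i (f i) := by
  classical
  intro n
  induction n with
  | zero =>
    intro q hq o f
    have : condSet q o f 0 = Ico (0:ℝ) 1 := by
      ext u; simp [condSet]
    simp [this, Real.volume_Ico]
  | succ n ih =>
    intro q hq o f
    obtain ⟨hq0, hq2⟩ := hq 0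
    set a := q 0 with ha
    have ha1 : a < 1 := lt_of_le_of_lt hq2 (by norm_num)
    have h2a : 2 * a ≤ 1 := by linarith
    set W := condSet (shf q) (shf o) (shf f) n with hWdef
    have hWsub : W ⊆ Ico (0:ℝ) 1 := condSet_subset _ _ _ _
    have hvolW : volume W = ∏ i ∈ Finset.range n, lenE q o (i+1) (f (i+1)) := by
      rw [ih (shf q) (fun k => hq (k+1)) (shf o) (shf f)]
      rfl
    have hshift : ∀ (u : ℝ) (i : ℕ), stepOut q o (i+1) (iter q (i+1) u)
        = stepOut (shf q) (shf o) i (iter (shf q) i (stepRe q 0 u)) := by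
      intro u i
      rw [iter_shift]
      rfl
    -- the three pieces
    set B1 : Set ℝ := (if o 0 0 ∈ f 0 then (fun u : ℝ => (u - 0) / a) ⁻¹' W else ∅) ∩ Ico 0 a
      with hB1def
    set B2 : Set ℝ := (if o 0 1 ∈ f 0 then (fun u : ℝ => (u - a) / a) ⁻¹' W else ∅)
      ∩ Ico a (2*a) with hB2def
    set B3 : Set ℝ := (if o 0 2 ∈ f 0 then (fun u : ℝ => (u - 2*a) / (1 - 2*a)) ⁻¹' W else ∅)
      ∩ Ico (2*a) 1 with hB3def
    -- membership characterizations
    have hmem1 : ∀ u : ℝ, u ∈ Ico (0:ℝ) a →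
        (u ∈ condSet q o f (n+1) ↔ (o 0 0 ∈ f 0 ∧ (u - 0)/a ∈ W)) := by
      intro u hu
      have hlt : u < a := hu.2
      have hre : stepRe q 0 u = u / a := if_pos hlt
      have hout : stepOut q o 0 (iter q 0 u) = o 0 0 := if_pos hlt
      have hdiv : (u - 0)/a = u / a := by ring_nf
      constructor
      · rintro ⟨_, hcond⟩
        have h0 := hcond 0 n.succ_pos
        rw [hout] at h0
        refine ⟨h0, ?_⟩
        rw [hdiv, ← hre]
        refine ⟨⟨?_, ?_⟩, ?_⟩
        · rw [hre]; exact div_nonneg hu.1 hq0.le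
        · rw [hre]; exact (div_lt_one hq0).2 hlt
        · intro i hi
          have := hcond (i+1) (Nat.succ_lt_succ hi)
          rw [hshift] at this
          exact this
      · rintro ⟨h0, hW'⟩
        rw [hdiv, ← hre] at hW'
        refine ⟨⟨hu.1, lt_trans hlt ha1⟩, ?_⟩
        intro i hi
        match i, hi with
        | 0, _ => rw [hout]; exact h0
        | (j+1), hj =>
          rw [hshift]
          exact hW'.2 j (Nat.lt_of_succ_lt_succ hj)
    have hmem2 : ∀ u : ℝ, u ∈ Ico a (2*a) →
        (u ∈ condSet q o f (n+1) ↔ (o 0 1 ∈ f 0 ∧ (u - a)/a ∈ W)) := by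
      intro u hu
      have hnlt : ¬ u < a := not_lt.2 hu.1
      have hlt2 : u < 2*a := hu.2
      have hre : stepRe q 0 u = (u - a) / a := by
        rw [stepRe, if_neg hnlt, if_pos hlt2]
      have hout : stepOut q o 0 (iter q 0 u) = o 0 1 := by
        rw [show iter q 0 u = u from rfl, stepOut, if_neg hnlt, if_pos hlt2]
      constructor
      · rintro ⟨_, hcond⟩
        have h0 := hcond 0 n.succ_pos
        rw [hout] at h0
        refine ⟨h0, ?_⟩
        rw [← hre]
        refine ⟨⟨?_, ?_⟩, ?_⟩
        · rw [hre]; exact div_nonneg (by linarith [hu.1]) hq0.le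
        · rw [hre]; exact (div_lt_one hq0).2 (by linarith)
        · intro i hi
          have := hcond (i+1) (Nat.succ_lt_succ hi)
          rw [hshift] at this
          exact this
      · rintro ⟨h0, hW'⟩
        rw [← hre] at hW'
        refine ⟨⟨by linarith [hu.1], by linarith⟩, ?_⟩
        intro i hi
        match i, hi with
        | 0, _ => rw [hout]; exact h0
        | (j+1), hj =>
          rw [hshift]
          exact hW'.2 j (Nat.lt_of_succ_lt_succ hj)
    have hmem3 : ∀ u : ℝ, u ∈ Ico (2*a) 1 →
        (u ∈ condSet q o f (n+1) ↔ (o 0 2 ∈ f 0 ∧ (u - 2*a)/(1 - 2*a) ∈ W)) := by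
      intro u hu
      have h2a1 : 2*a < 1 := lt_of_le_of_lt hu.1 hu.2
      have hnlt : ¬ u < a := not_lt.2 (by linarith [hu.1])
      have hnlt2 : ¬ u < 2*a := not_lt.2 hu.1
      have hre : stepRe q 0 u = (u - 2*a) / (1 - 2*a) := by
        rw [stepRe, if_neg hnlt, if_neg hnlt2]
      have hout : stepOut q o 0 (iter q 0 u) = o 0 2 := by
        rw [show iter q 0 u = u from rfl, stepOut, if_neg hnlt, if_neg hnlt2]
      constructor
      · rintro ⟨_, hcond⟩
        have h0 := hcond 0 n.succ_pos
        rw [hout] at h0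
        refine ⟨h0, ?_⟩
        rw [← hre]
        refine ⟨⟨?_, ?_⟩, ?_⟩
        · rw [hre]; exact div_nonneg (by linarith [hu.1]) (by linarith)
        · rw [hre]; exact (div_lt_one (by linarith)).2 (by linarith [hu.2])
        · intro i hi
          have := hcond (i+1) (Nat.succ_lt_succ hi)
          rw [hshift] at this
          exact this
      · rintro ⟨h0, hW'⟩
        rw [← hre] at hW'
        refine ⟨⟨by linarith [hu.1], hu.2⟩, ?_⟩
        intro i hi
        match i, hi with
        | 0, _ => rw [hout]; exact h0
        | (j+1), hj =>
          rw [hshift]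
          exact hW'.2 j (Nat.lt_of_succ_lt_succ hj)
    have hsplit : condSet q o f (n+1) = B1 ∪ B2 ∪ B3 := by
      ext u
      constructor
      · intro hu
        have hu01 : u ∈ Ico (0:ℝ) 1 := hu.1
        rcases lt_or_ge u a with h1 | h1
        · have huIco : u ∈ Ico (0:ℝ) a := ⟨hu01.1, h1⟩
          obtain ⟨h0, hW'⟩ := (hmem1 u huIco).1 hu
          exact Or.inl (Or.inl ⟨by rw [if_pos h0]; exact hW', huIco⟩)
        · rcases lt_or_ge u (2*a) with h2 | h2
          · have huIco : u ∈ Ico a (2*a) := ⟨h1, h2⟩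
            obtain ⟨h0, hW'⟩ := (hmem2 u huIco).1 hu
            exact Or.inl (Or.inr ⟨by rw [if_pos h0]; exact hW', huIco⟩)
          · have huIco : u ∈ Ico (2*a) 1 := ⟨h2, hu01.2⟩
            obtain ⟨h0, hW'⟩ := (hmem3 u huIco).1 hu
            exact Or.inr ⟨by rw [if_pos h0]; exact hW', huIco⟩
      · rintro ((⟨hB, hIco⟩ | ⟨hB, hIco⟩) | ⟨hB, hIco⟩)
        · by_cases h0 : o 0 0 ∈ f 0
          · rw [if_pos h0] at hB
            exact (hmem1 u hIco).2 ⟨h0, hB⟩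
          · rw [if_neg h0] at hB; exact absurd hB (notMem_empty u)
        · by_cases h0 : o 0 1 ∈ f 0
          · rw [if_pos h0] at hB
            exact (hmem2 u hIco).2 ⟨h0, hB⟩
          · rw [if_neg h0] at hB; exact absurd hB (notMem_empty u)
        · by_cases h0 : o 0 2 ∈ f 0
          · rw [if_pos h0] at hB
            exact (hmem3 u hIco).2 ⟨h0, hB⟩
          · rw [if_neg h0] at hB; exact absurd hB (notMem_empty u)
    -- volumes of the pieces
    have hWm : MeasurableSet W := measurableSet_condSet _ _ _ _
    have hvol1 : volume B1 = (if o 0 0 ∈ f 0 then volume W * ENNReal.ofReal a else 0) := by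
      by_cases h0 : o 0 0 ∈ f 0
      · rw [hB1def, if_pos h0, if_pos h0]
        have hsub : (fun u : ℝ => (u - 0) / a) ⁻¹' W ⊆ Ico 0 a := by
          intro u hu
          have := hWsub hu
          have h1 : (0:ℝ) ≤ (u - 0)/a := this.1
          have h2 : (u - 0)/a < 1 := this.2
          constructor
          · nlinarith [(le_div_iff₀ hq0).1 h1]
          · nlinarith [(div_lt_one hq0).1 h2]
        rw [inter_eq_left.2 hsub, affine_vol 0 a hq0 W, mul_comm]
      · rw [hB1def, if_neg h0, if_neg h0, empty_inter, measure_empty]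
    have hvol2 : volume B2 = (if o 0 1 ∈ f 0 then volume W * ENNReal.ofReal a else 0) := by
      by_cases h0 : o 0 1 ∈ f 0
      · rw [hB2def, if_pos h0, if_pos h0]
        have hsub : (fun u : ℝ => (u - a) / a) ⁻¹' W ⊆ Ico a (2*a) := by
          intro u hu
          have := hWsub hu
          have h1 : (0:ℝ) ≤ (u - a)/a := this.1
          have h2 : (u - a)/a < 1 := this.2
          constructor
          · nlinarith [(le_div_iff₀ hq0).1 h1]
          · nlinarith [(div_lt_one hq0).1 h2]
        rw [inter_eq_left.2 hsub, affine_vol a a hq0 W, mul_comm]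
      · rw [hB2def, if_neg h0, if_neg h0, empty_inter, measure_empty]
    have hvol3 : volume B3 = (if o 0 2 ∈ f 0 then volume W * ENNReal.ofReal (1 - 2*a) else 0) := by
      rcases lt_or_eq_of_le h2a with h2a1 | h2a1
      · by_cases h0 : o 0 2 ∈ f 0
        · rw [hB3def, if_pos h0, if_pos h0]
          have hl : (0:ℝ) < 1 - 2*a := by linarith
          have hsub : (fun u : ℝ => (u - 2*a) / (1 - 2*a)) ⁻¹' W ⊆ Ico (2*a) 1 := by
            intro u hu
            have := hWsub hu
            have h1 : (0:ℝ) ≤ (u - 2*a)/(1-2*a) := this.1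
            have h2 : (u - 2*a)/(1-2*a) < 1 := this.2
            constructor
            · nlinarith [(le_div_iff₀ hl).1 h1]
            · nlinarith [(div_lt_one hl).1 h2]
          rw [inter_eq_left.2 hsub, affine_vol (2*a) (1-2*a) hl W, mul_comm]
        · rw [hB3def, if_neg h0, if_neg h0, empty_inter, measure_empty]
      · have hIcoempty : Ico (2*a) (1:ℝ) = ∅ := by
          rw [← h2a1]; exact Ico_self _
        have : volume B3 = 0 := by
          rw [hB3def, hIcoempty, inter_empty, measure_empty]
        rw [this, ← h2a1]
        simp
    -- measurability of pieces
    have hmB2 : MeasurableSet B2 := by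
      refine MeasurableSet.inter ?_ measurableSet_Ico
      by_cases h0 : o 0 1 ∈ f 0
      · rw [if_pos h0]
        exact ((measurable_id.sub measurable_const).div_const _) hWm
      · rw [if_neg h0]; exact MeasurableSet.empty
    have hmB3 : MeasurableSet B3 := by
      refine MeasurableSet.inter ?_ measurableSet_Ico
      by_cases h0 : o 0 2 ∈ f 0
      · rw [if_pos h0]
        exact ((measurable_id.sub measurable_const).div_const _) hWm
      · rw [if_neg h0]; exact MeasurableSet.empty
    -- disjointness
    have hd12 : Disjoint B1 B2 := by
      refine Disjoint.mono inter_subset_right inter_subset_right ?_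
      exact Ico_disjoint_Ico_same
    have hd13 : Disjoint (B1 ∪ B2) B3 := by
      have hdd : Disjoint (Ico (0:ℝ) (2*a)) (Ico (2*a) 1) := Ico_disjoint_Ico_same
      exact hdd.mono
        (union_subset (inter_subset_right.trans (Ico_subset_Ico_right (by linarith)))
          (inter_subset_right.trans (Ico_subset_Ico_left (by linarith)))) inter_subset_right
    rw [hsplit, measure_union hd13 hmB3, measure_union hd12 hmB2, hvol1, hvol2, hvol3]
    rw [Finset.prod_range_succ', ← hvolW]
    simp only [lenE]
    simp only [mul_add, mul_ite, mul_zero]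
    rw [ha]


def coupling (q : ℕ → ℝ) (o : ℕ → Fin 3 → S) : Measure (ℕ → S) :=
  Measure.map (Phi q o) (volume.restrict (Ico 0 1))

lemma measurableSet_cylS (s : Finset ℕ) (f : ℕ → Set S) :
    MeasurableSet {x : ℕ → S | ∀ i ∈ s, x i ∈ f i} := by
  have h : {x : ℕ → S | ∀ i ∈ s, x i ∈ f i}
      = ⋂ i ∈ (s : Set ℕ), (fun x : ℕ → S => x i) ⁻¹' f i := by
    ext x; simp
  rw [h]
  exact MeasurableSet.biInter (s : Set ℕ).to_countable fun i _ =>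
    (measurable_pi_apply i) (measurableSet_S (f i))

lemma lenE_univ (q : ℕ → ℝ) (hq : ∀ k, 0 < q k ∧ q k ≤ 1/2) (o : ℕ → Fin 3 → S) (n : ℕ) :
    lenE q o n univ = 1 := by
  obtain ⟨h1, h2⟩ := hq n
  simp only [lenE, mem_univ, if_true]
  rw [← ENNReal.ofReal_add h1.le h1.le, ← ENNReal.ofReal_add (by linarith) (by linarith),
    show q n + q n + (1 - 2 * q n) = 1 by ring]
  exact ENNReal.ofReal_one

lemma coupling_cyl (q : ℕ → ℝ) (hq : ∀ k, 0 < q k ∧ q k ≤ 1/2) (o : ℕ → Fin 3 → S)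
    (s : Finset ℕ) (f : ℕ → Set S) :
    coupling q o {x : ℕ → S | ∀ i ∈ s, x i ∈ f i} = ∏ i ∈ s, lenE q o i (f i) := by
  classical
  set n := (s.sup id) + 1 with hn
  have hsub : ∀ i ∈ s, i < n := fun i hi => Nat.lt_succ_of_le (Finset.le_sup (f := id) hi)
  set f' : ℕ → Set S := fun i => if i ∈ s then f i else univ with hf'
  have hpre : (Phi q o) ⁻¹' {x : ℕ → S | ∀ i ∈ s, x i ∈ f i} ∩ Ico 0 1 = condSet q o f' n := by
    ext u
    simp only [mem_inter_iff, mem_preimage, mem_setOf_eq, condSet]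
    constructor
    · rintro ⟨h1, h2⟩
      refine ⟨h2, fun i hi => ?_⟩
      by_cases his : i ∈ s
      · simp only [hf', if_pos his]; exact h1 i his
      · simp only [hf', if_neg his]; trivial
    · rintro ⟨h2, h1⟩
      refine ⟨fun i hi => ?_, h2⟩
      have h3 := h1 i (hsub i hi)
      simp only [hf', if_pos hi] at h3
      exact h3
  rw [coupling, Measure.map_apply (measurable_Phi q o) (measurableSet_cylS s f),
    Measure.restrict_apply ((measurable_Phi q o) (measurableSet_cylS s f)), hpre,
    vol_condSet n q hq o f']
  have h1 : ∏ i ∈ s, lenE q o i (f' i) = ∏ i ∈ Finset.range n, lenE q o i (f' i) :=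
    Finset.prod_subset (fun i hi => Finset.mem_range.2 (hsub i hi))
      (fun i _ hi => by simp only [hf', if_neg hi]; exact lenE_univ q hq o i)
  rw [← h1]
  exact Finset.prod_congr rfl fun i hi => by simp only [hf', if_pos hi]

instance coupling_prob (q : ℕ → ℝ) (o : ℕ → Fin 3 → S) :
    IsProbabilityMeasure (coupling q o) := by
  constructor
  rw [coupling, Measure.map_apply (measurable_Phi q o) MeasurableSet.univ,
    Set.preimage_univ, Measure.restrict_apply MeasurableSet.univ, Set.univ_inter,
    Real.volume_Ico]
  norm_num

/-! ## pattern cylinders in `ℕ → Bool` -/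

def patternCyl (s : Finset ℕ) (g : ℕ → Bool) : Set (ℕ → Bool) := {x | ∀ i ∈ s, x i = g i}

lemma measurableSet_patternCyl (s : Finset ℕ) (g : ℕ → Bool) :
    MeasurableSet (patternCyl s g) := by
  have h : patternCyl s g = ⋂ i ∈ (s : Set ℕ), (fun x : ℕ → Bool => x i) ⁻¹' {g i} := by
    ext x; simp [patternCyl]
  rw [h]
  exact MeasurableSet.biInter (s : Set ℕ).to_countable fun i _ =>
    (measurable_pi_apply i) (measurableSet_singleton _)

def patternCyls : Set (Set (ℕ → Bool)) := {A | ∃ s g, A = patternCyl s g}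

lemma isPiSystem_patternCyls : IsPiSystem patternCyls := by
  rintro A ⟨s, g, rfl⟩ B ⟨t, h, rfl⟩ hne
  obtain ⟨x0, hx0A, hx0B⟩ := hne
  refine ⟨s ∪ t, fun i => if i ∈ s then g i else h i, ?_⟩
  ext x
  simp only [patternCyl, mem_inter_iff, mem_setOf_eq, Finset.mem_union]
  constructor
  · rintro ⟨h1, h2⟩ i hi
    by_cases his : i ∈ s
    · rw [if_pos his]; exact h1 i his
    · rw [if_neg his]; exact h2 i (hi.resolve_left his)
  · intro hx
    constructor
    · intro i hi
      have := hx i (Or.inl hi); rwa [if_pos hi] at this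
    · intro i hi
      by_cases his : i ∈ s
      · have hgh : g i = h i := by
          have h1 := hx0A i his
          have h2 := hx0B i hi
          rw [h1] at h2; exact h2
        have := hx i (Or.inl his); rw [if_pos his] at this; rw [this, hgh]
      · have := hx i (Or.inr hi); rwa [if_neg his] at this

lemma gen_patternCyls :
    MeasurableSpace.generateFrom patternCyls = (inferInstance : MeasurableSpace (ℕ → Bool)) := by
  apply le_antisymm
  · exact MeasurableSpace.generateFrom_le
      (by rintro A ⟨s, g, rfl⟩; exact measurableSet_patternCyl s g)
  · have hle : MeasurableSpace.pi ≤ MeasurableSpace.generateFrom patternCyls := by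
      refine iSup_le fun i => ?_
      intro t ht
      obtain ⟨s, _, rfl⟩ := ht
      have h1 : (fun b : ℕ → Bool => b i) ⁻¹' s = ⋃ b ∈ s, patternCyl {i} (fun _ => b) := by
        ext x; simp [patternCyl]
      rw [h1]
      exact MeasurableSet.biUnion s.to_countable fun b _ =>
        MeasurableSpace.measurableSet_generateFrom ⟨{i}, fun _ => b, rfl⟩
    exact hle

lemma ext_pattern {μ ν : Measure (ℕ → Bool)} [IsProbabilityMeasure μ] [IsProbabilityMeasure ν]
    (h : ∀ s g, μ (patternCyl s g) = ν (patternCyl s g)) : μ = ν := by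
  refine MeasureTheory.ext_of_generate_finite patternCyls gen_patternCyls.symm
    isPiSystem_patternCyls ?_ ?_
  · rintro A ⟨s, g, rfl⟩; exact h s g
  · simp

/-! ## the specific outcome tables -/

def tri (A B C : S) : Fin 3 → S := fun j => if j.val = 0 then A else if j.val = 1 then B else C

@[simp] lemma tri0 (A B C : S) : tri A B C 0 = A := rfl
@[simp] lemma tri1 (A B C : S) : tri A B C 1 = B := rfl
@[simp] lemma tri2 (A B C : S) : tri A B C 2 = C := rfl

/-- outcomes: diagonal coupling below `N`, antithetic coupling from `N` on. -/
def oN (N : ℕ) : ℕ → Fin 3 → S := fun n =>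
  if n < N then tri (true, true) (false, false) (false, false)
  else tri (true, false) (false, true) (false, false)

lemma lenE_oN_fst (q : ℕ → ℝ) (hq : ∀ k, 0 < q k ∧ q k ≤ 1 / 2) (N n : ℕ) (b : Bool) :
    lenE q (oN N) n {v : S | v.1 = b}
      = if b then ENNReal.ofReal (q n) else ENNReal.ofReal (1 - q n) := by
  obtain ⟨h1, h2⟩ := hq n
  have hnum : q n + (1 - 2 * q n) = 1 - q n := by ring
  rcases Nat.lt_or_ge n N with h | h
  · have ho : oN N n = tri (true, true) (false, false) (false, false) := if_pos h
    cases b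
    · have hco : ENNReal.ofReal (q n) + ENNReal.ofReal (1 - 2 * q n)
          = ENNReal.ofReal (1 - q n) := by
        rw [← ENNReal.ofReal_add h1.le (by linarith), hnum]
      simp [lenE, ho, hco]
    · simp only [lenE, ho, tri0, tri1, tri2, mem_setOf_eq]
      simp
  · have ho : oN N n = tri (true, false) (false, true) (false, false) := if_neg (Nat.not_lt.2 h)
    cases b
    · have hco : ENNReal.ofReal (q n) + ENNReal.ofReal (1 - 2 * q n)
          = ENNReal.ofReal (1 - q n) := by
        rw [← ENNReal.ofReal_add h1.le (by linarith), hnum]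
      simp [lenE, ho, hco]
    · simp only [lenE, ho, tri0, tri1, tri2, mem_setOf_eq]
      simp

lemma lenE_oN_snd (q : ℕ → ℝ) (hq : ∀ k, 0 < q k ∧ q k ≤ 1 / 2) (N n : ℕ) (b : Bool) :
    lenE q (oN N) n {v : S | v.2 = b}
      = if b then ENNReal.ofReal (q n) else ENNReal.ofReal (1 - q n) := by
  obtain ⟨h1, h2⟩ := hq n
  have hnum : q n + (1 - 2 * q n) = 1 - q n := by ring
  rcases Nat.lt_or_ge n N with h | h
  · have ho : oN N n = tri (true, true) (false, false) (false, false) := if_pos h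
    cases b
    · have hco : ENNReal.ofReal (q n) + ENNReal.ofReal (1 - 2 * q n)
          = ENNReal.ofReal (1 - q n) := by
        rw [← ENNReal.ofReal_add h1.le (by linarith), hnum]
      simp [lenE, ho, hco]
    · simp only [lenE, ho, tri0, tri1, tri2, mem_setOf_eq]
      simp
  · have ho : oN N n = tri (true, false) (false, true) (false, false) := if_neg (Nat.not_lt.2 h)
    cases b
    · have hco : ENNReal.ofReal (q n) + ENNReal.ofReal (1 - 2 * q n)
          = ENNReal.ofReal (1 - q n) := by
        rw [← ENNReal.ofReal_add h1.le (by linarith), hnum]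
      simp [lenE, ho, hco]
    · simp only [lenE, ho, tri0, tri1, tri2, mem_setOf_eq]
      simp

/-! ## the two marginals of the coupling are `μ` -/

section Main

variable {μ : Measure (ℕ → Bool)} {p : ℕ → ℝ≥0∞}

lemma hq_of_hp (hp : ∀ n, 0 < p n ∧ p n ≤ 1 / 2) :
    ∀ n, 0 < (p n).toReal ∧ (p n).toReal ≤ 1 / 2 := by
  intro n
  have hne : p n ≠ ⊤ := ne_top_of_le_ne_top (by norm_num) (hp n).2
  constructor
  · exact ENNReal.toReal_pos (hp n).1.ne' hne
  · have := ENNReal.toReal_mono (by norm_num : (1/2 : ℝ≥0∞) ≠ ⊤) (hp n).2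
    simpa using this

lemma ofReal_toReal_p (hp : ∀ n, 0 < p n ∧ p n ≤ 1 / 2) (n : ℕ) :
    ENNReal.ofReal ((p n).toReal) = p n := by
  exact ENNReal.ofReal_toReal (ne_top_of_le_ne_top (by norm_num) (hp n).2)

lemma ofReal_one_sub_toReal_p (hp : ∀ n, 0 < p n ∧ p n ≤ 1 / 2) (n : ℕ) :
    ENNReal.ofReal (1 - (p n).toReal) = 1 - p n := by
  have hne : p n ≠ ⊤ := ne_top_of_le_ne_top (by norm_num) (hp n).2
  have hle : p n ≤ 1 := le_trans (hp n).2 (by norm_num)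
  have h1 : (1 - p n).toReal = 1 - (p n).toReal := by
    rw [ENNReal.toReal_sub_of_le hle (by norm_num)]
    simp
  rw [← h1]
  exact ENNReal.ofReal_toReal (by
    intro hh
    have : (1 : ℝ≥0∞) - p n ≤ 1 := tsub_le_self
    rw [hh] at this
    exact absurd this (by simp))

lemma marginal_fst (hp : ∀ n, 0 < p n ∧ p n ≤ 1 / 2) (hμ : IsBernoulli μ p) (N : ℕ) :
    Measure.map (fun x : ℕ → S => fun n => (x n).1)
      (coupling (fun n => (p n).toReal) (oN N)) = μ := by
  haveI := hμ.1
  set q : ℕ → ℝ := fun n => (p n).toReal with hqdef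
  have hq := hq_of_hp hp
  have hXm : Measurable (fun x : ℕ → S => fun n => (x n).1) :=
    measurable_pi_lambda _ fun n => (measurable_pi_apply n).fst
  haveI : IsProbabilityMeasure (Measure.map (fun x : ℕ → S => fun n => (x n).1)
      (coupling q (oN N))) := Measure.isProbabilityMeasure_map hXm.aemeasurable
  apply ext_pattern
  intro s g
  rw [Measure.map_apply hXm (measurableSet_patternCyl s g)]
  have hpre : (fun x : ℕ → S => fun n => (x n).1) ⁻¹' patternCyl s g
      = {x : ℕ → S | ∀ i ∈ s, x i ∈ {v : S | v.1 = g i}} := rfl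
  rw [hpre, coupling_cyl q hq (oN N) s _]
  have hrhs : μ (patternCyl s g) = ∏ i ∈ s, (if g i then p i else 1 - p i) := hμ.2 s g
  rw [hrhs]
  refine Finset.prod_congr rfl fun i _ => ?_
  rw [lenE_oN_fst q hq N i (g i)]
  cases hgi : g i
  · simp only [if_false, Bool.false_eq_true]
    exact ofReal_one_sub_toReal_p hp i
  · simp only [if_true]
    exact ofReal_toReal_p hp i

lemma marginal_snd (hp : ∀ n, 0 < p n ∧ p n ≤ 1 / 2) (hμ : IsBernoulli μ p) (N : ℕ) :
    Measure.map (fun x : ℕ → S => fun n => (x n).2)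
      (coupling (fun n => (p n).toReal) (oN N)) = μ := by
  haveI := hμ.1
  set q : ℕ → ℝ := fun n => (p n).toReal with hqdef
  have hq := hq_of_hp hp
  have hYm : Measurable (fun x : ℕ → S => fun n => (x n).2) :=
    measurable_pi_lambda _ fun n => (measurable_pi_apply n).snd
  haveI : IsProbabilityMeasure (Measure.map (fun x : ℕ → S => fun n => (x n).2)
      (coupling q (oN N))) := Measure.isProbabilityMeasure_map hYm.aemeasurable
  apply ext_pattern
  intro s g
  rw [Measure.map_apply hYm (measurableSet_patternCyl s g)]
  have hpre : (fun x : ℕ → S => fun n => (x n).2) ⁻¹' patternCyl s g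
      = {x : ℕ → S | ∀ i ∈ s, x i ∈ {v : S | v.2 = g i}} := rfl
  rw [hpre, coupling_cyl q hq (oN N) s _]
  have hrhs : μ (patternCyl s g) = ∏ i ∈ s, (if g i then p i else 1 - p i) := hμ.2 s g
  rw [hrhs]
  refine Finset.prod_congr rfl fun i _ => ?_
  rw [lenE_oN_snd q hq N i (g i)]
  cases hgi : g i
  · simp only [if_false, Bool.false_eq_true]
    exact ofReal_one_sub_toReal_p hp i
  · simp only [if_true]
    exact ofReal_toReal_p hp i

end Main

/-! ## the key conditional bound -/

section Main2

variable {μ : Measure (ℕ → Bool)} {p : ℕ → ℝ≥0∞}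

lemma key_bound (hp : ∀ n, 0 < p n ∧ p n ≤ 1 / 2) (hμ : IsBernoulli μ p)
    (F : Filter ℕ) [F.NeBot] (hF : F ≤ Filter.cofinite)
    {C : Set (ℕ → Bool)} (hCm : MeasurableSet C) (hCF : C ⊆ filterSet F)
    (N : ℕ) (g : ℕ → Bool) :
    μ (C ∩ patternCyl (Finset.range N) g) + μ (C ∩ patternCyl (Finset.range N) g)
      ≤ μ (patternCyl (Finset.range N) g) := by
  haveI := hμ.1
  set q : ℕ → ℝ := fun n => (p n).toReal with hqdef
  have hq := hq_of_hp hp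
  set κ := coupling q (oN N) with hκ
  set X : (ℕ → S) → (ℕ → Bool) := fun x => fun n => (x n).1 with hX
  set Y : (ℕ → S) → (ℕ → Bool) := fun x => fun n => (x n).2 with hY
  have hXm : Measurable X := measurable_pi_lambda _ fun n => (measurable_pi_apply n).fst
  have hYm : Measurable Y := measurable_pi_lambda _ fun n => (measurable_pi_apply n).snd
  have hXκ : Measure.map X κ = μ := marginal_fst hp hμ N
  have hYκ : Measure.map Y κ = μ := marginal_snd hp hμ N
  set cyl := patternCyl (Finset.range N) g with hcyl
  have hcylm : MeasurableSet cyl := measurableSet_patternCyl _ _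
  have hCcylm : MeasurableSet (C ∩ cyl) := hCm.inter hcylm
  set E1 := X ⁻¹' (C ∩ cyl) with hE1
  set E2 := Y ⁻¹' (C ∩ cyl) with hE2
  have hE2m : MeasurableSet E2 := hYm hCcylm
  have hκ1 : κ E1 = μ (C ∩ cyl) := by rw [← hXκ, Measure.map_apply hXm hCcylm]
  have hκ2 : κ E2 = μ (C ∩ cyl) := by rw [← hYκ, Measure.map_apply hYm hCcylm]
  set Bad1 : Set (ℕ → S) :=
    ⋃ n, (if N ≤ n then {x : ℕ → S | x n ∈ ({(true, true)} : Set S)} else ∅) with hBad1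
  set Bad2 : Set (ℕ → S) :=
    ⋃ n, (if n < N then {x : ℕ → S | x n ∈ {v : S | v.1 ≠ v.2}} else ∅) with hBad2
  have hBad1null : κ Bad1 = 0 := by
    refine measure_iUnion_null fun n => ?_
    by_cases h : N ≤ n
    · rw [if_pos h]
      have hset : {x : ℕ → S | x n ∈ ({(true, true)} : Set S)}
          = {x : ℕ → S | ∀ i ∈ ({n} : Finset ℕ), x i ∈ ({(true, true)} : Set S)} := by
        ext x; simp
      rw [hset, hκ, coupling_cyl q hq (oN N) {n} _, Finset.prod_singleton]
      have ho : oN N n = tri (true, false) (false, true) (false, false) :=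
        if_neg (Nat.not_lt.2 h)
      simp [lenE, ho]
    · rw [if_neg h]; exact measure_empty
  have hBad2null : κ Bad2 = 0 := by
    refine measure_iUnion_null fun n => ?_
    by_cases h : n < N
    · rw [if_pos h]
      have hset : {x : ℕ → S | x n ∈ {v : S | v.1 ≠ v.2}}
          = {x : ℕ → S | ∀ i ∈ ({n} : Finset ℕ), x i ∈ {v : S | v.1 ≠ v.2}} := by
        ext x; simp
      rw [hset, hκ, coupling_cyl q hq (oN N) {n} _, Finset.prod_singleton]
      have ho : oN N n = tri (true, true) (false, false) (false, false) := if_pos h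
      simp [lenE, ho]
    · rw [if_neg h]; exact measure_empty
  have hsub12 : E1 ∩ E2 ⊆ Bad1 := by
    intro x hx
    by_contra hxB
    have hxB' : ∀ n, N ≤ n → x n ≠ (true, true) := by
      intro n hn hxn
      exact hxB (mem_iUnion.2 ⟨n, by rw [if_pos hn]; exact hxn⟩)
    have hXC : X x ∈ filterSet F := hCF hx.1.1
    have hYC : Y x ∈ filterSet F := hCF hx.2.1
    have hT : {n | X x n = true} ∩ {n | Y x n = true} ∈ F := Filter.inter_mem hXC hYC
    set T := {n | X x n = true} ∩ {n | Y x n = true} with hTdef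
    have hTN : T ⊆ Iio N := by
      intro m hm
      by_contra hmN
      have hNm : N ≤ m := Nat.le_of_not_lt (by simpa [mem_Iio] using hmN)
      apply hxB' m hNm
      have h1 : (x m).1 = true := hm.1
      have h2 : (x m).2 = true := hm.2
      exact Prod.ext h1 h2
    have hTfin : T.Finite := (Set.finite_Iio N).subset hTN
    have hcof : Tᶜ ∈ Filter.cofinite := by
      rw [Filter.mem_cofinite, compl_compl]; exact hTfin
    have hbot : T ∩ Tᶜ ∈ F := Filter.inter_mem hT (hF hcof)
    rw [inter_compl_self] at hbot
    exact Filter.empty_notMem F hbot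
  have hsubE2 : E2 ⊆ X ⁻¹' cyl ∪ Bad2 := by
    intro x hx
    by_cases hxB : x ∈ Bad2
    · exact Or.inr hxB
    · left
      have hxB' : ∀ n, n < N → (x n).1 = (x n).2 := by
        intro n hn
        by_contra hne
        exact hxB (mem_iUnion.2 ⟨n, by rw [if_pos hn]; exact hne⟩)
      show X x ∈ cyl
      intro i hi
      have hiN : i < N := Finset.mem_range.1 hi
      have h2 : Y x i = g i := hx.2 i hi
      show (x i).1 = g i
      rw [hxB' i hiN]
      exact h2
  have hsubE1 : E1 ⊆ X ⁻¹' cyl := fun x hx => hx.2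
  calc μ (C ∩ cyl) + μ (C ∩ cyl) = κ E1 + κ E2 := by rw [hκ1, hκ2]
    _ = κ (E1 ∪ E2) + κ (E1 ∩ E2) := (measure_union_add_inter E1 hE2m).symm
    _ ≤ κ (X ⁻¹' cyl ∪ Bad2) + κ Bad1 :=
        add_le_add (measure_mono (union_subset (hsubE1.trans subset_union_left) hsubE2))
          (measure_mono hsub12)
    _ ≤ (κ (X ⁻¹' cyl) + κ Bad2) + κ Bad1 := add_le_add_left (measure_union_le _ _) _
    _ = κ (X ⁻¹' cyl) := by rw [hBad1null, hBad2null, add_zero, add_zero]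
    _ = μ cyl := by rw [← hXκ, Measure.map_apply hXm hcylm]

/-! ## sets depending on finitely many coordinates -/

def depOn (A : Set (ℕ → Bool)) (N : ℕ) : Prop :=
  ∀ x y : ℕ → Bool, (∀ i < N, x i = y i) → (x ∈ A ↔ y ∈ A)

def extN (N : ℕ) (g : Fin N → Bool) : ℕ → Bool :=
  fun i => if h : i < N then g ⟨i, h⟩ else false

open scoped Classical in
lemma decomp {A : Set (ℕ → Bool)} {N : ℕ} (h : depOn A N) :
    A = ⋃ g ∈ Finset.univ.filter (fun g : Fin N → Bool => extN N g ∈ A),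
      patternCyl (Finset.range N) (extN N g) := by
  ext x
  simp only [mem_iUnion, Finset.mem_filter, Finset.mem_univ, true_and, exists_prop]
  constructor
  · intro hx
    refine ⟨fun j => x j.val, ?_, ?_⟩
    · have hagree : ∀ i < N, extN N (fun j : Fin N => x j.val) i = x i := by
        intro i hi; simp [extN, hi]
      exact (h _ _ hagree).2 hx
    · intro i hi
      have hiN : i < N := Finset.mem_range.1 hi
      simp [extN, hiN]
  · rintro ⟨g, hgA, hxg⟩
    have hagree : ∀ i < N, extN N g i = x i := by
      intro i hi
      exact (hxg i (Finset.mem_range.2 hi)).symm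
    exact (h _ _ hagree).1 hgA

open scoped Classical in
lemma measurableSet_of_depOn {A : Set (ℕ → Bool)} {N : ℕ} (h : depOn A N) :
    MeasurableSet A := by
  rw [decomp h]
  exact MeasurableSet.biUnion (Finset.countable_toSet _)
    fun g _ => measurableSet_patternCyl _ _

open scoped Classical in
lemma keyA (hp : ∀ n, 0 < p n ∧ p n ≤ 1 / 2) (hμ : IsBernoulli μ p)
    (F : Filter ℕ) [F.NeBot] (hF : F ≤ Filter.cofinite)
    {C : Set (ℕ → Bool)} (hCm : MeasurableSet C) (hCF : C ⊆ filterSet F)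
    {A : Set (ℕ → Bool)} {N : ℕ} (hdep : depOn A N) :
    μ (C ∩ A) + μ (C ∩ A) ≤ μ A := by
  haveI := hμ.1
  rw [decomp hdep]
  set GS := Finset.univ.filter (fun g : Fin N → Bool => extN N g ∈ A) with hGS
  have hdisj : (GS : Set (Fin N → Bool)).PairwiseDisjoint
      (fun g => patternCyl (Finset.range N) (extN N g)) := by
    intro g1 _ g2 _ hne
    refine Set.disjoint_left.2 fun x hx1 hx2 => hne ?_
    funext j
    have h1 := hx1 j.val (Finset.mem_range.2 j.isLt)
    have h2 := hx2 j.val (Finset.mem_range.2 j.isLt)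
    have e1 : extN N g1 j.val = g1 j := by simp [extN, j.isLt]
    have e2 : extN N g2 j.val = g2 j := by simp [extN, j.isLt]
    rw [← e1, ← h1, h2, e2]
  have hdisj2 : (GS : Set (Fin N → Bool)).PairwiseDisjoint
      (fun g => C ∩ patternCyl (Finset.range N) (extN N g)) := by
    intro g1 h1 g2 h2 hne
    exact (hdisj h1 h2 hne).mono inter_subset_right inter_subset_right
  have hinter : C ∩ ⋃ g ∈ GS, patternCyl (Finset.range N) (extN N g)
      = ⋃ g ∈ GS, (C ∩ patternCyl (Finset.range N) (extN N g)) := by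
    rw [inter_iUnion₂]
  rw [hinter]
  rw [measure_biUnion_finset hdisj (fun g _ => measurableSet_patternCyl _ _),
    measure_biUnion_finset hdisj2 (fun g _ => hCm.inter (measurableSet_patternCyl _ _))]
  rw [← Finset.sum_add_distrib]
  exact Finset.sum_le_sum fun g _ => key_bound hp hμ F hF hCm hCF N (extN N g)

/-! ## approximation by sets depending on finitely many coordinates -/

lemma approx (hprob : IsProbabilityMeasure μ) {E : Set (ℕ → Bool)} (hE : MeasurableSet E) :
    ∀ ε : ℝ≥0∞, 0 < ε → ∃ A, (∃ N, depOn A N) ∧ μ (E \ A) + μ (A \ E) ≤ ε := by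
  have hE' : MeasurableSet[MeasurableSpace.generateFrom patternCyls] E := by
    rw [gen_patternCyls]; exact hE
  refine MeasurableSpace.generateFrom_induction
    (C := patternCyls)
    (p := fun E _ => ∀ ε : ℝ≥0∞, 0 < ε → ∃ A, (∃ N, depOn A N) ∧ μ (E \ A) + μ (A \ E) ≤ ε)
    ?_ ?_ ?_ ?_ E hE'
  · rintro A ⟨s, g, rfl⟩ _ ε hε
    refine ⟨patternCyl s g, ⟨s.sup id + 1, ?_⟩, by simp⟩
    intro x y hxy
    constructor
    · intro hx i hi
      rw [← hxy i (Nat.lt_succ_of_le (Finset.le_sup (f := id) hi))]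
      exact hx i hi
    · intro hy i hi
      rw [hxy i (Nat.lt_succ_of_le (Finset.le_sup (f := id) hi))]
      exact hy i hi
  · intro ε hε
    exact ⟨∅, ⟨0, fun x y _ => Iff.rfl⟩, by simp⟩
  · intro t ht hrec ε hε
    obtain ⟨A, ⟨N, hdep⟩, hd⟩ := hrec ε hε
    refine ⟨Aᶜ, ⟨N, fun x y hxy => not_congr (hdep x y hxy)⟩, ?_⟩
    have h1 : tᶜ \ Aᶜ = A \ t := by ext z; simp [mem_diff]; tauto
    have h2 : Aᶜ \ tᶜ = t \ A := by ext z; simp [mem_diff]; tauto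
    rw [h1, h2, add_comm]
    exact hd
  · intro sseq hsmeas hrec ε hε
    by_cases hεtop : ε = ⊤
    · exact ⟨∅, ⟨0, fun x y _ => Iff.rfl⟩, by simp [hεtop]⟩
    have hsmeas' : ∀ n, MeasurableSet (sseq n) := by
      intro n
      have := hsmeas n
      rw [gen_patternCyls] at this
      exact this
    set U := ⋃ i, sseq i with hU
    have hε2 : (0:ℝ≥0∞) < ε / 2 := ENNReal.div_pos hε.ne' (by norm_num)
    have hε2top : ε / 2 ≠ ⊤ := (ENNReal.div_lt_top hεtop (by norm_num)).ne
    obtain ⟨n, hn⟩ : ∃ n, μ U ≤ ε / 2 + μ (Set.accumulate sseq n) := by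
      by_cases hle : μ U ≤ ε / 2
      · exact ⟨0, le_trans hle le_self_add⟩
      push_neg at hle
      have hU0 : μ U ≠ 0 := fun hh => by rw [hh] at hle; exact absurd hle (by simp)
      have hUlt : μ U - ε / 2 < μ U :=
        ENNReal.sub_lt_self (measure_ne_top μ U) hU0 hε2.ne'
      have hacc : μ U = ⨆ m, μ (Set.accumulate sseq m) :=
        measure_iUnion_eq_iSup_accumulate
      have hlt2 : μ U - ε / 2 < ⨆ m, μ (Set.accumulate sseq m) := hacc ▸ hUlt
      obtain ⟨m, hm⟩ := lt_iSup_iff.1 (lt_of_lt_of_le hUlt (le_of_eq hacc))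
      refine ⟨m, le_of_lt ?_⟩
      have := (ENNReal.sub_lt_iff_lt_right hε2top hle.le).1 hm
      rwa [add_comm] at this
    set δ := ε / 2 / ((n + 1 : ℕ) : ℝ≥0∞) with hδ
    have hδ0 : 0 < δ := ENNReal.div_pos hε2.ne' (ENNReal.natCast_ne_top _)
    choose As hAs1 hAs2 using fun i : ℕ => hrec i δ hδ0
    choose Ns hNs using hAs1
    set A := ⋃ i ∈ Finset.range (n+1), As i with hA
    have hdep : ∃ N, depOn A N := by
      refine ⟨(Finset.range (n+1)).sup Ns, fun x y hxy => ?_⟩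
      simp only [hA, mem_iUnion, exists_prop]
      constructor
      · rintro ⟨i, hi, hx⟩
        exact ⟨i, hi, (hNs i x y fun j hj =>
          hxy j (lt_of_lt_of_le hj (Finset.le_sup hi))).1 hx⟩
      · rintro ⟨i, hi, hx⟩
        exact ⟨i, hi, (hNs i x y fun j hj =>
          hxy j (lt_of_lt_of_le hj (Finset.le_sup hi))).2 hx⟩
    refine ⟨A, hdep, ?_⟩
    have hsub1 : U \ A ⊆ (U \ Set.accumulate sseq n)
        ∪ ⋃ i ∈ Finset.range (n+1), (sseq i \ As i) := by
      intro x hx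
      by_cases hacc : x ∈ Set.accumulate sseq n
      · right
        obtain ⟨j, hj, hxj⟩ := Set.mem_accumulate.1 hacc
        have hxA : x ∉ As j := by
          intro hxA
          exact hx.2 (mem_iUnion₂.2 ⟨j, Finset.mem_range.2 (Nat.lt_succ_of_le hj), hxA⟩)
        exact mem_iUnion₂.2 ⟨j, Finset.mem_range.2 (Nat.lt_succ_of_le hj), hxj, hxA⟩
      · left; exact ⟨hx.1, hacc⟩
    have hsub2 : A \ U ⊆ ⋃ i ∈ Finset.range (n+1), (As i \ sseq i) := by
      intro x hx
      obtain ⟨i, hi, hxi⟩ := mem_iUnion₂.1 hx.1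
      exact mem_iUnion₂.2 ⟨i, hi, hxi, fun hxs => hx.2 (mem_iUnion.2 ⟨i, hxs⟩)⟩
    have hAccm : MeasurableSet (Set.accumulate sseq n) := by
      have : Set.accumulate sseq n = ⋃ j ∈ Finset.range (n+1), sseq j := by
        ext z
        simp [Set.mem_accumulate, Nat.lt_succ_iff]
      rw [this]
      exact MeasurableSet.biUnion (Finset.countable_toSet _) fun j _ => hsmeas' j
    have hdacc : μ (U \ Set.accumulate sseq n) ≤ ε / 2 := by
      have hdiff : μ (U \ Set.accumulate sseq n) = μ U - μ (Set.accumulate sseq n) :=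
        measure_diff (Set.accumulate_subset_iUnion n) hAccm.nullMeasurableSet
          (measure_ne_top μ _)
      rw [hdiff]
      exact tsub_le_iff_right.2 hn
    have b1 : μ (U \ A) ≤ ε / 2 + ∑ i ∈ Finset.range (n+1), μ (sseq i \ As i) := by
      refine le_trans (measure_mono hsub1) (le_trans (measure_union_le _ _) ?_)
      exact add_le_add hdacc (measure_biUnion_finset_le _ _)
    have b2 : μ (A \ U) ≤ ∑ i ∈ Finset.range (n+1), μ (As i \ sseq i) :=
      le_trans (measure_mono hsub2) (measure_biUnion_finset_le _ _)
    have b3 : ∑ i ∈ Finset.range (n+1), (μ (sseq i \ As i) + μ (As i \ sseq i))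
        ≤ ((n+1 : ℕ) : ℝ≥0∞) * δ := by
      calc ∑ i ∈ Finset.range (n+1), (μ (sseq i \ As i) + μ (As i \ sseq i))
          ≤ ∑ _i ∈ Finset.range (n+1), δ := Finset.sum_le_sum fun i _ => hAs2 i
        _ = ((n+1 : ℕ) : ℝ≥0∞) * δ := by
            rw [Finset.sum_const, Finset.card_range, nsmul_eq_mul]
    calc μ (U \ A) + μ (A \ U)
        ≤ (ε / 2 + ∑ i ∈ Finset.range (n+1), μ (sseq i \ As i))
          + ∑ i ∈ Finset.range (n+1), μ (As i \ sseq i) := add_le_add b1 b2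
      _ = ε / 2 + ∑ i ∈ Finset.range (n+1), (μ (sseq i \ As i) + μ (As i \ sseq i)) := by
          rw [Finset.sum_add_distrib, add_assoc]
      _ ≤ ε / 2 + ((n+1 : ℕ) : ℝ≥0∞) * δ := add_le_add_right b3 _
      _ = ε / 2 + ε / 2 := by
          rw [hδ, ENNReal.mul_div_cancel (by exact_mod_cast Nat.succ_ne_zero n)
            (ENNReal.natCast_ne_top _)]
      _ = ε := ENNReal.add_halves ε

end Main2

end

end BernoulliConstruction

open BernoulliConstruction

theorem measurable_filter_is_null (μ : Measure (ℕ → Bool)) (p : ℕ → ℝ≥0∞)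
    (hp : ∀ n, 0 < p n ∧ p n ≤ 1 / 2) (hμ : IsBernoulli μ p)
    (F : Filter ℕ) [F.NeBot] (hF : F ≤ Filter.cofinite)
    (hmeas : NullMeasurableSet (filterSet F) μ) :
    μ (filterSet F) = 0 := by
  haveI := hμ.1
  obtain ⟨C, hCsub, hCm, hCae⟩ := hmeas.exists_measurable_subset_ae_eq
  have hCμ : μ C = μ (filterSet F) := measure_congr hCae
  have hmain : ∀ ε : ℝ≥0∞, 0 < ε → μ (filterSet F) ≤ ε := by
    intro ε hε
    have hε2 : (0:ℝ≥0∞) < ε / 2 := ENNReal.div_pos hε.ne' (by norm_num)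
    obtain ⟨A, ⟨N, hdep⟩, hd⟩ := approx hμ.1 hCm (ε / 2) hε2
    set t := μ (C ∩ A) with ht
    have h1 : μ C ≤ t + μ (C \ A) := by
      conv_lhs => rw [← Set.inter_union_diff C A]
      exact measure_union_le _ _
    have h2 : μ (C \ A) ≤ ε / 2 := le_trans le_self_add hd
    have h3 : t + t ≤ μ A := keyA hp hμ F hF hCm hCsub hdep
    have h4 : μ A ≤ μ (A \ C) + t := by
      conv_lhs => rw [← Set.diff_union_inter A C]
      refine le_trans (measure_union_le _ _) ?_
      rw [Set.inter_comm]
    have h5 : t + t ≤ ε / 2 + t :=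
      le_trans h3 (le_trans h4 (add_le_add_left (le_trans le_add_self hd) t))
    have h6 : t ≤ ε / 2 := (ENNReal.add_le_add_iff_right (measure_ne_top μ _)).1 h5
    calc μ (filterSet F) = μ C := hCμ.symm
      _ ≤ t + μ (C \ A) := h1
      _ ≤ ε / 2 + ε / 2 := add_le_add h6 h2
      _ = ε := ENNReal.add_halves ε
  by_contra h0
  have hne : μ (filterSet F) ≠ ⊤ := measure_ne_top μ _
  have hle := hmain (μ (filterSet F) / 2) (ENNReal.div_pos h0 (by norm_num))
  have hhalf : μ (filterSet F) / 2 < μ (filterSet F) := ENNReal.half_lt_self h0 hne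
  exact absurd hle (not_le.2 hhalf)
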